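/- arXiv:1708.09277 — 3 statements merged into one kernel-verified Lean document; each statement's English description precedes it below -/
import Mathlib

section
/- For the open region D = {(x,y) : 0 < x < y < 1} in ℝ², the double integral ∫∫_D (1/(1−x)) · (1/y) dx dy equals ζ(2) = π²/6. -/
open MeasureTheory Real

lemma aux_inner (y : ℝ) (h0 : 0 < y) (h1 : y < 1) :
    ∫ x in Set.Ioo (0:ℝ) y, (1 / (1 - x)) * (1 / y) = (1 / y) * (-Real.log (1 - y)) := by
  rw [← integral_Ioc_eq_integral_Ioo, ← intervalIntegral.integral_of_le h0.le]
  simp_rw [mul_comm]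
  rw [intervalIntegral.integral_const_mul]
  have : ∫ x in (0:ℝ)..y, 1 / (1 - x) = ∫ u in (1-y)..(1-0:ℝ), 1 / u :=
    (intervalIntegral.integral_comp_sub_left (fun u => 1 / u) 1)
  rw [this, integral_one_div (by
    intro hmem
    rw [Set.mem_uIcc] at hmem
    rcases hmem with ⟨h,_⟩|⟨_,h⟩ <;> linarith)]
  rw [show (1-0:ℝ)/(1-y) = (1-y)⁻¹ by rw [sub_zero, one_div], Real.log_inv]

lemma aux_hasSum (y : ℝ) (h0 : 0 < y) (h1 : y < 1) :
    HasSum (fun n : ℕ => y ^ n / (n + 1)) ((1 / y) * (-Real.log (1 - y))) := by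
  have h := (hasSum_pow_div_log_of_abs_lt_one (x := y)
    (by rw [abs_lt]; constructor <;> linarith)).mul_left (1 / y)
  convert h using 2 with n
  · rfl
  field_simp
  ring

lemma aux_zeta : HasSum (fun n : ℕ => 1 / ((n : ℝ) + 1) ^ 2) (π ^ 2 / 6) := by
  have h := (hasSum_nat_add_iff' (f := fun n : ℕ => (1:ℝ) / (n:ℝ)^2) 1).mpr hasSum_zeta_two
  simp only [Finset.range_one, Finset.sum_singleton, Nat.cast_zero] at h
  norm_num at h
  convert h using 2 with n
  · rfl
  ring

lemma aux_pow_int (n : ℕ) :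
    ∫ y in Set.Ioo (0:ℝ) 1, y ^ n / (n + 1) = 1 / ((n : ℝ) + 1) ^ 2 := by
  rw [← integral_Ioc_eq_integral_Ioo, ← intervalIntegral.integral_of_le zero_le_one]
  simp_rw [div_eq_mul_inv, intervalIntegral.integral_mul_const, integral_pow]
  norm_num
  rw [sq, mul_inv]

lemma aux_int : (∫ p in {p : ℝ × ℝ | 0 < p.1 ∧ p.1 < p.2 ∧ p.2 < 1},
      (1 / (1 - p.1)) * (1 / p.2)) = π ^ 2 / 6 := by
  set S : Set (ℝ × ℝ) := {p | 0 < p.1 ∧ p.1 < p.2 ∧ p.2 < 1} with hSdef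
  have hS : MeasurableSet S := by
    apply MeasurableSet.inter
    · exact measurableSet_lt measurable_const measurable_fst
    exact (measurableSet_lt measurable_fst measurable_snd).inter
      (measurableSet_lt measurable_snd measurable_const)
  have hfm : Measurable (fun p : ℝ × ℝ => (1 / (1 - p.1)) * (1 / p.2)) := by
    apply Measurable.mul
    · simp_rw [one_div]; exact (measurable_const.sub measurable_fst).inv
    · simp_rw [one_div]; exact measurable_snd.inv
  have hnn : 0 ≤ᵐ[volume.restrict S] fun p : ℝ × ℝ => (1 / (1 - p.1)) * (1 / p.2) := by
    filter_upwards [ae_restrict_mem hS] with p hp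
    obtain ⟨h1, h2, h3⟩ := hp
    have : (0:ℝ) < 1 - p.1 := by linarith
    have : (0:ℝ) < p.2 := by linarith
    positivity
  rw [integral_eq_lintegral_of_nonneg_ae hnn hfm.aestronglyMeasurable]
  have key : (∫⁻ p in S, ENNReal.ofReal ((1 / (1 - p.1)) * (1 / p.2)))
      = ENNReal.ofReal (π ^ 2 / 6) := by
    rw [← lintegral_indicator hS, Measure.volume_eq_prod,
      lintegral_prod_symm _ ((hfm.ennreal_ofReal.indicator hS).aemeasurable)]
    have hfun : (fun y : ℝ => ∫⁻ x, S.indicator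
          (fun p : ℝ × ℝ => ENNReal.ofReal ((1 / (1 - p.1)) * (1 / p.2))) (x, y))
        = (Set.Ioo (0:ℝ) 1).indicator
          (fun y => ENNReal.ofReal ((1 / y) * (-Real.log (1 - y)))) := by
      funext y
      by_cases hy : y ∈ Set.Ioo (0:ℝ) 1
      · obtain ⟨hy0, hy1⟩ := hy
        rw [Set.indicator_of_mem (Set.mem_Ioo.mpr ⟨hy0, hy1⟩)]
        have hind : (fun x : ℝ => S.indicator
              (fun p : ℝ × ℝ => ENNReal.ofReal ((1 / (1 - p.1)) * (1 / p.2))) (x, y))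
            = (Set.Ioo (0:ℝ) y).indicator
              (fun x => ENNReal.ofReal ((1 / (1 - x)) * (1 / y))) := by
          funext x
          by_cases hx : x ∈ Set.Ioo (0:ℝ) y
          · rw [Set.indicator_of_mem hx, Set.indicator_of_mem (by exact ⟨hx.1, hx.2, hy1⟩)]
          · rw [Set.indicator_of_notMem hx, Set.indicator_of_notMem (by
              intro hmem
              exact hx ⟨hmem.1, hmem.2.1⟩)]
        rw [hind, lintegral_indicator measurableSet_Ioo]
        have hint : IntegrableOn (fun x : ℝ => (1 / (1 - x)) * (1 / y))
            (Set.Ioo (0:ℝ) y) := by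
          apply (ContinuousOn.integrableOn_Icc ?_).mono_set Set.Ioo_subset_Icc_self
          apply ContinuousOn.mul ?_ continuousOn_const
          apply continuousOn_const.div (by fun_prop)
          intro x hx
          have : x ≤ y := hx.2
          intro h
          have : (1:ℝ) = x := by linarith [sub_eq_zero.mp h]
          linarith
        have hnn' : 0 ≤ᵐ[volume.restrict (Set.Ioo (0:ℝ) y)]
            fun x : ℝ => (1 / (1 - x)) * (1 / y) := by
          filter_upwards [ae_restrict_mem measurableSet_Ioo] with x hx
          have : (0:ℝ) < 1 - x := by linarith [hx.2]
          positivity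
        rw [← ofReal_integral_eq_lintegral_ofReal hint hnn', aux_inner y hy0 hy1]
      · rw [Set.indicator_of_notMem hy]
        have : (fun x : ℝ => S.indicator
              (fun p : ℝ × ℝ => ENNReal.ofReal ((1 / (1 - p.1)) * (1 / p.2))) (x, y))
            = fun _ => 0 := by
          funext x
          apply Set.indicator_of_notMem
          intro hmem
          exact hy ⟨lt_trans hmem.1 hmem.2.1, hmem.2.2⟩
        rw [this, lintegral_zero]
    rw [hfun, lintegral_indicator measurableSet_Ioo]
    rw [setLIntegral_congr_fun measurableSet_Ioo
      (fun y hy => by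
        have h0 : (0:ℝ) < y := hy.1
        rw [← (aux_hasSum y hy.1 hy.2).tsum_eq,
          ENNReal.ofReal_tsum_of_nonneg (fun n => by positivity)
            (aux_hasSum y hy.1 hy.2).summable])]
    rw [lintegral_tsum (fun n => by fun_prop)]
    have hterm : ∀ n : ℕ, (∫⁻ y in Set.Ioo (0:ℝ) 1, ENNReal.ofReal (y ^ n / (n + 1)))
        = ENNReal.ofReal (1 / ((n : ℝ) + 1) ^ 2) := by
      intro n
      rw [← ofReal_integral_eq_lintegral_ofReal]
      · rw [aux_pow_int]
      · apply (ContinuousOn.integrableOn_Icc (by fun_prop)).mono_set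
          Set.Ioo_subset_Icc_self
      · filter_upwards [ae_restrict_mem measurableSet_Ioo] with x hx
        have := hx.1
        positivity
    simp_rw [hterm]
    rw [← ENNReal.ofReal_tsum_of_nonneg (fun n => by positivity) aux_zeta.summable,
      aux_zeta.tsum_eq]
  rw [key, ENNReal.toReal_ofReal (by positivity)]

theorem triangle_integral_eq_zeta_two :
    (∫ p in {p : ℝ × ℝ | 0 < p.1 ∧ p.1 < p.2 ∧ p.2 < 1},
      (1 / (1 - p.1)) * (1 / p.2)) = π ^ 2 / 6 ∧
    riemannZeta 2 = (π : ℂ) ^ 2 / 6 := ⟨aux_int, riemannZeta_two⟩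
end

section
/- The double improper integral ∫_0^1 ∫_0^1 1/((1 − xy)·√(xy)) dx dy equals π²/2. -/
open MeasureTheory Real

lemma hasSum_odd_inv_sq : HasSum (fun n : ℕ => (1:ℝ) / ((n:ℝ) + 2⁻¹)^2) (π^2/2) := by
  have hf := hasSum_zeta_two
  have he : HasSum (fun k : ℕ => (1:ℝ) / (((2*k : ℕ)) : ℝ)^2) (4⁻¹ * (π^2/6)) := by
    have heq : (fun k : ℕ => (1:ℝ) / (((2*k : ℕ)) : ℝ)^2) = fun k : ℕ => 4⁻¹ * ((1:ℝ)/(k:ℝ)^2) := by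
      funext k
      push_cast
      rw [mul_pow]
      ring
    rw [heq]
    exact hf.mul_left _
  have hsumm : Summable (fun k : ℕ => (1:ℝ) / (((2*k+1 : ℕ)) : ℝ)^2) :=
    hf.summable.comp_injective (fun a b hab => by omega)
  obtain ⟨a, ho⟩ := hsumm
  have htot := HasSum.even_add_odd (f := fun n : ℕ => (1:ℝ)/(n:ℝ)^2) he ho
  have ha : a = π^2/8 := by
    have := htot.unique hf
    linarith
  subst ha
  have h4 := ho.mul_left (4 : ℝ)
  have : (fun n : ℕ => (1:ℝ) / ((n:ℝ) + 2⁻¹)^2) = fun n : ℕ => 4 * ((1:ℝ) / (((2*n+1 : ℕ)) : ℝ)^2) := by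
    funext n
    have hne : ((n:ℝ) + 2⁻¹) ≠ 0 := by positivity
    push_cast
    field_simp
    ring
  rw [this]
  convert h4 using 1
  · rfl
  ring

theorem unit_square_integral :
    ∫ p in (Set.Ioo (0 : ℝ) 1) ×ˢ (Set.Ioo (0 : ℝ) 1),
      1 / ((1 - p.1 * p.2) * Real.sqrt (p.1 * p.2)) = π ^ 2 / 2 := by
  have hr : ∀ n : ℕ, (-1 : ℝ) < (n:ℝ) - 2⁻¹ := by
    intro n
    have : (0:ℝ) ≤ n := Nat.cast_nonneg n
    linarith
  -- one-dimensional integrability and value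
  have hInt1 : ∀ n : ℕ, IntegrableOn (fun x : ℝ => x ^ ((n:ℝ) - 2⁻¹)) (Set.Ioo 0 1) := by
    intro n
    have h := intervalIntegral.intervalIntegrable_rpow' (a := 0) (b := 1) (hr n)
    rw [intervalIntegrable_iff_integrableOn_Ioc_of_le zero_le_one] at h
    exact h.mono_set Set.Ioo_subset_Ioc_self
  have hval1 : ∀ n : ℕ, ∫ x in Set.Ioo (0:ℝ) 1, x ^ ((n:ℝ) - 2⁻¹) = ((n:ℝ) + 2⁻¹)⁻¹ := by
    intro n
    rw [← integral_Ioc_eq_integral_Ioo, ← intervalIntegral.integral_of_le zero_le_one,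
      integral_rpow (Or.inl (hr n))]
    have h1 : (n:ℝ) - 2⁻¹ + 1 = (n:ℝ) + 2⁻¹ := by ring
    have h2 : (n:ℝ) + 2⁻¹ ≠ 0 := by positivity
    rw [h1, Real.one_rpow, Real.zero_rpow h2]
    rw [sub_zero, one_div]
  -- the series terms on the product space
  set F : ℕ → ℝ × ℝ → ℝ := fun n p => (p.1 * p.2) ^ ((n:ℝ) - 2⁻¹) with hF
  set μ : Measure (ℝ × ℝ) := volume.restrict ((Set.Ioo (0 : ℝ) 1) ×ˢ (Set.Ioo (0 : ℝ) 1)) with hμ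
  have hμeq : μ = (volume.restrict (Set.Ioo (0:ℝ) 1)).prod (volume.restrict (Set.Ioo (0:ℝ) 1)) := by
    rw [hμ, Measure.volume_eq_prod, ← Measure.prod_restrict]
  have hmemae : ∀ᵐ p ∂μ, p ∈ (Set.Ioo (0 : ℝ) 1) ×ˢ (Set.Ioo (0 : ℝ) 1) :=
    ae_restrict_mem (measurableSet_Ioo.prod measurableSet_Ioo)
  have hFG : ∀ n : ℕ, F n =ᵐ[μ] fun p => p.1 ^ ((n:ℝ) - 2⁻¹) * p.2 ^ ((n:ℝ) - 2⁻¹) := by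
    intro n
    filter_upwards [hmemae] with p hp
    exact Real.mul_rpow hp.1.1.le hp.2.1.le
  have hF_int : ∀ n : ℕ, Integrable (F n) μ := by
    intro n
    refine (Integrable.congr ?_ (hFG n).symm)
    rw [hμeq]
    exact Integrable.mul_prod (hInt1 n) (hInt1 n)
  have hF_val : ∀ n : ℕ, ∫ p, F n p ∂μ = (((n:ℝ) + 2⁻¹)⁻¹)^2 := by
    intro n
    rw [integral_congr_ae (hFG n), hμeq,
      integral_prod_mul (f := fun x : ℝ => x ^ ((n:ℝ) - 2⁻¹)) (g := fun x : ℝ => x ^ ((n:ℝ) - 2⁻¹)),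
      hval1 n, sq]
  have hF_nonneg : ∀ n : ℕ, ∀ᵐ p ∂μ, 0 ≤ F n p := by
    intro n
    filter_upwards [hmemae] with p hp
    exact Real.rpow_nonneg (mul_nonneg hp.1.1.le hp.2.1.le) _
  have hF_norm : ∀ n : ℕ, ∫ p, ‖F n p‖ ∂μ = (((n:ℝ) + 2⁻¹)⁻¹)^2 := by
    intro n
    rw [← hF_val n]
    refine integral_congr_ae ?_
    filter_upwards [hF_nonneg n] with p hp
    exact Real.norm_of_nonneg hp
  have hsummable : Summable (fun n : ℕ => (((n:ℝ) + 2⁻¹)⁻¹)^2) := by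
    have := hasSum_odd_inv_sq.summable
    convert this using 2 with n
    rw [inv_pow, one_div]
  have hsum := hasSum_integral_of_summable_integral_norm hF_int
    (by simpa only [hF_norm] using hsummable)
  have hval : HasSum (fun n : ℕ => ∫ p, F n p ∂μ) (π^2/2) := by
    have : (fun n : ℕ => ∫ p, F n p ∂μ) = fun n : ℕ => (1:ℝ) / ((n:ℝ) + 2⁻¹)^2 := by
      funext n
      rw [hF_val n, inv_pow, one_div]
    rw [this]
    exact hasSum_odd_inv_sq
  have hintsum : ∫ p, (∑' n, F n p) ∂μ = π^2/2 := hsum.unique hval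
  rw [← hintsum]
  refine setIntegral_congr_fun (measurableSet_Ioo.prod measurableSet_Ioo) ?_
  intro p hp
  obtain ⟨⟨hx0, hx1⟩, ⟨hy0, hy1⟩⟩ := hp
  set t : ℝ := p.1 * p.2 with ht
  have ht0 : 0 < t := mul_pos hx0 hy0
  have ht1 : t < 1 := by nlinarith
  have hterm : ∀ n : ℕ, t ^ ((n:ℝ) - 2⁻¹) = t ^ n * (Real.sqrt t)⁻¹ := by
    intro n
    rw [sub_eq_add_neg, Real.rpow_add ht0, Real.rpow_natCast, Real.rpow_neg ht0.le,
      Real.sqrt_eq_rpow]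
    norm_num
  calc 1 / ((1 - t) * Real.sqrt t)
      = (1 - t)⁻¹ * (Real.sqrt t)⁻¹ := by rw [one_div, mul_inv]
    _ = (∑' n : ℕ, t ^ n) * (Real.sqrt t)⁻¹ := by
        rw [tsum_geometric_of_lt_one ht0.le ht1]
    _ = ∑' n : ℕ, t ^ n * (Real.sqrt t)⁻¹ := (tsum_mul_right).symm
    _ = ∑' n : ℕ, t ^ ((n:ℝ) - 2⁻¹) := by
        refine tsum_congr fun n => (hterm n).symm
end

section
/- For k ≥ 2, the iterated integral over the simplex {1 > t₁ > t₂ > ... > t_k > 0} of (dt₁/t₁)···(dt_{k−1}/t_{k−1})·(dt_k/(1−t_k)) equals ζ(k). In particular for k = 3: ∫∫∫_{1>t₁>t₂>t₃>0} 1/(t₁ t₂ (1−t₃)) dt₁dt₂dt₃ = ζ(3). -/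
open MeasureTheory Real ENNReal

def zSet (k : ℕ) (c : ℝ) : Set (Fin (k + 1) → ℝ) :=
  {t | StrictAnti t ∧ 0 < t (Fin.last k) ∧ t 0 < c}

lemma zSet_pos {k : ℕ} {c : ℝ} {t : Fin (k+1) → ℝ} (ht : t ∈ zSet k c) : 0 < c :=
  lt_trans (lt_of_lt_of_le ht.2.1 (ht.1.antitone (Fin.zero_le _))) ht.2.2

lemma insertNth_mem_zSet_iff {k : ℕ} {c x : ℝ} {y : Fin (k+1) → ℝ} :
    (0 : Fin (k+2)).insertNth (α := fun _ => ℝ) x y ∈ zSet (k+1) c ↔ x < c ∧ y ∈ zSet k x := by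
  set t := (0 : Fin (k+2)).insertNth (α := fun _ => ℝ) x y with ht
  have h0 : t 0 = x := Fin.insertNth_apply_same (α := fun _ => ℝ) 0 x y
  have hsucc : ∀ i : Fin (k+1), t i.succ = y i := by
    intro i
    have := Fin.insertNth_apply_succAbove (α := fun _ => ℝ) (0 : Fin (k+2)) x y i
    rwa [Fin.zero_succAbove] at this
  have hlast : t (Fin.last (k+1)) = y (Fin.last k) := by
    rw [← Fin.succ_last]; exact hsucc _
  constructor
  · rintro ⟨hanti, hl, htop⟩
    refine ⟨h0 ▸ htop, ?_, hlast ▸ hl, ?_⟩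
    · intro a b hab
      have := hanti (Fin.succ_lt_succ_iff.mpr hab)
      rwa [hsucc, hsucc] at this
    · have := hanti (show (0 : Fin (k+2)) < Fin.succ 0 from Fin.succ_pos 0)
      rwa [hsucc, h0] at this
  · rintro ⟨hxc, hanti, hl, htop⟩
    refine ⟨?_, hlast ▸ hl, h0 ▸ hxc⟩
    rw [Fin.strictAnti_iff_succ_lt]
    intro i
    induction i using Fin.cases with
    | zero =>
      rw [Fin.castSucc_zero, h0, hsucc]
      exact htop
    | succ j =>
      rw [← Fin.succ_castSucc, hsucc, hsucc]
      exact hanti Fin.castSucc_lt_succ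

lemma prod_insertNth {k : ℕ} (x : ℝ) (y : Fin (k+1) → ℝ) :
    (∏ i : Fin (k+1), 1 / (0 : Fin (k+2)).insertNth (α := fun _ => ℝ) x y i.castSucc) =
      (1 / x) * ∏ i : Fin k, 1 / y i.castSucc := by
  set t := (0 : Fin (k+2)).insertNth (α := fun _ => ℝ) x y with ht
  have h0 : t 0 = x := Fin.insertNth_apply_same (α := fun _ => ℝ) 0 x y
  have hsucc : ∀ i : Fin (k+1), t i.succ = y i := by
    intro i
    have := Fin.insertNth_apply_succAbove (α := fun _ => ℝ) (0 : Fin (k+2)) x y i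
    rwa [Fin.zero_succAbove] at this
  rw [Fin.prod_univ_succ, Fin.castSucc_zero, h0]
  refine congrArg (fun z => 1 / x * z) (Finset.prod_congr rfl fun i _ => ?_)
  rw [← Fin.succ_castSucc, hsucc]

lemma measurableSet_zSet (k : ℕ) (c : ℝ) : MeasurableSet (zSet k c) := by
  have h1 : {t : Fin (k+1) → ℝ | StrictAnti t} =
      ⋂ (i : Fin (k+1)) (j : Fin (k+1)) (_ : i < j), {t | t j < t i} := by
    ext t
    simp only [Set.mem_setOf_eq, Set.mem_iInter]
    exact ⟨fun h i j hij => h hij, fun h a b hab => h a b hab⟩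
  have : zSet k c = {t : Fin (k+1) → ℝ | StrictAnti t} ∩
      ({t | 0 < t (Fin.last k)} ∩ {t | t 0 < c}) := by
    ext t; simp [zSet, and_assoc]
  rw [this, h1]
  refine MeasurableSet.inter ?_ (MeasurableSet.inter ?_ ?_)
  · exact MeasurableSet.iInter fun i => MeasurableSet.iInter fun j =>
      MeasurableSet.iInter fun _ => measurableSet_lt (measurable_pi_apply j) (measurable_pi_apply i)
  · exact measurableSet_lt measurable_const (measurable_pi_apply _)
  · exact measurableSet_lt (measurable_pi_apply _) measurable_const

lemma measurable_monomial (k m : ℕ) :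
    Measurable (fun t : Fin (k+1) → ℝ =>
      ENNReal.ofReal ((∏ i : Fin k, 1 / t i.castSucc) * t (Fin.last k) ^ m)) := by
  apply ENNReal.measurable_ofReal.comp
  apply Measurable.mul
  · exact Finset.measurable_prod _ fun i _ => measurable_const.div (measurable_pi_apply _)
  · exact (measurable_pi_apply _).pow_const m

lemma lintegral_Ioo_pow_mul (m : ℕ) (c C : ℝ) (hc : 0 < c) (hC : 0 ≤ C) :
    ∫⁻ x in Set.Ioo (0:ℝ) c, ENNReal.ofReal (x ^ m * C) =
      ENNReal.ofReal (c ^ (m+1) / (m+1) * C) := by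
  rw [← ofReal_integral_eq_lintegral_ofReal]
  · congr 1
    rw [← integral_Ioc_eq_integral_Ioo, ← intervalIntegral.integral_of_le hc.le,
      intervalIntegral.integral_mul_const, integral_pow]
    ring
  · exact (((continuous_pow m).mul continuous_const).integrableOn_Icc).mono_set
      Set.Ioo_subset_Icc_self
  · filter_upwards [ae_restrict_mem measurableSet_Ioo] with x hx
    exact mul_nonneg (pow_nonneg hx.1.le m) hC

lemma monomial_lintegral (m : ℕ) : ∀ (k : ℕ) (c : ℝ), 0 < c →
    ∫⁻ t in zSet k c,
      ENNReal.ofReal ((∏ i : Fin k, 1 / t i.castSucc) * t (Fin.last k) ^ m) =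
    ENNReal.ofReal (c ^ (m+1) / ((m:ℝ)+1) ^ (k+1)) := by
  intro k
  classical
  induction k with
  | zero =>
    intro c hc
    rw [← lintegral_indicator (measurableSet_zSet 0 c)]
    show ∫⁻ (a : Fin 1 → ℝ), _ ∂volume = _
    erw [← ((volume_preserving_funUnique (Fin 1) ℝ).symm _).lintegral_comp_emb
      (MeasurableEquiv.measurableEmbedding _)]
    have key : ∀ x : ℝ,
        (zSet 0 c).indicator (fun t => ENNReal.ofReal
          ((∏ i : Fin 0, 1 / t i.castSucc) * t (Fin.last 0) ^ m))
          ((MeasurableEquiv.funUnique (Fin 1) ℝ).symm x)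
        = (Set.Ioo (0:ℝ) c).indicator (fun x => ENNReal.ofReal (x ^ m * 1)) x := by
      intro x
      rw [Set.indicator_apply, Set.indicator_apply]
      have hmem : (MeasurableEquiv.funUnique (Fin 1) ℝ).symm x ∈ zSet 0 c ↔
          x ∈ Set.Ioo (0:ℝ) c := by
        simp only [zSet, Set.mem_setOf_eq, Set.mem_Ioo, MeasurableEquiv.funUnique,
          Equiv.funUnique]
        constructor
        · rintro ⟨-, h1, h2⟩; exact ⟨h1, h2⟩
        · rintro ⟨h1, h2⟩
          exact ⟨fun a b hab => absurd (Fin.lt_def.mp hab) (by have := a.isLt; have := b.isLt; omega), h1, h2⟩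
      rw [if_congr hmem rfl rfl]
      split
      · simp [MeasurableEquiv.funUnique, Equiv.funUnique]
      · rfl
    rw [lintegral_congr key, lintegral_indicator measurableSet_Ioo,
      lintegral_Ioo_pow_mul m c 1 hc zero_le_one]
    norm_num
  | succ k ih =>
    intro c hc
    rw [← lintegral_indicator (measurableSet_zSet (k+1) c)]
    rw [← ((volume_preserving_piFinSuccAbove (fun _ : Fin (k+2) => ℝ) 0).symm _).lintegral_comp_emb
      (MeasurableEquiv.measurableEmbedding _)]
    rw [MeasureTheory.Measure.volume_eq_prod, lintegral_prod]
    swap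
    · apply Measurable.aemeasurable
      exact ((measurable_monomial (k+1) m).indicator (measurableSet_zSet (k+1) c)).comp
        (MeasurableEquiv.measurable _)
    have key : ∀ x : ℝ, (∫⁻ y : Fin (k+1) → ℝ,
        (zSet (k+1) c).indicator (fun t => ENNReal.ofReal
          ((∏ i : Fin (k+1), 1 / t i.castSucc) * t (Fin.last (k+1)) ^ m))
          ((MeasurableEquiv.piFinSuccAbove (fun _ : Fin (k+2) => ℝ) 0).symm (x, y)))
        = (Set.Ioo (0:ℝ) c).indicator
            (fun x => ENNReal.ofReal (x ^ m * (1 / ((m:ℝ)+1) ^ (k+1)))) x := by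
      intro x
      have hsymm : ∀ y : Fin (k+1) → ℝ,
          (MeasurableEquiv.piFinSuccAbove (fun _ : Fin (k+2) => ℝ) 0).symm (x, y) =
          (0 : Fin (k+2)).insertNth (α := fun _ => ℝ) x y := fun y => rfl
      by_cases hx : x ∈ Set.Ioo (0:ℝ) c
      · rw [Set.indicator_of_mem hx]
        have hind : ∀ y : Fin (k+1) → ℝ,
            (zSet (k+1) c).indicator (fun t => ENNReal.ofReal
              ((∏ i : Fin (k+1), 1 / t i.castSucc) * t (Fin.last (k+1)) ^ m))
              ((MeasurableEquiv.piFinSuccAbove (fun _ : Fin (k+2) => ℝ) 0).symm (x, y))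
            = (zSet k x).indicator (fun y => ENNReal.ofReal (1/x) *
                ENNReal.ofReal ((∏ i : Fin k, 1 / y i.castSucc) * y (Fin.last k) ^ m)) y := by
          intro y
          rw [hsymm y, Set.indicator_apply, Set.indicator_apply]
          have hmem : (0 : Fin (k+2)).insertNth (α := fun _ => ℝ) x y ∈ zSet (k+1) c ↔
              y ∈ zSet k x := by
            rw [insertNth_mem_zSet_iff]
            exact ⟨fun h => h.2, fun h => ⟨hx.2, h⟩⟩
          rw [if_congr hmem rfl rfl]
          split
          · rename_i hy
            have hl : (0 : Fin (k+2)).insertNth (α := fun _ => ℝ) x y (Fin.last (k+1)) =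
                y (Fin.last k) := by
              rw [← Fin.succ_last]
              have := Fin.insertNth_apply_succAbove (α := fun _ => ℝ) (0 : Fin (k+2)) x y
                (Fin.last k)
              rwa [Fin.zero_succAbove] at this
            rw [prod_insertNth, hl, mul_assoc, ENNReal.ofReal_mul (one_div_nonneg.mpr hx.1.le)]
          · rfl
        rw [lintegral_congr hind, lintegral_indicator (measurableSet_zSet k x),
          lintegral_const_mul _ (measurable_monomial k m), ih x hx.1,
          ← ENNReal.ofReal_mul (one_div_nonneg.mpr hx.1.le)]
        congr 1
        have hxne : x ≠ 0 := ne_of_gt hx.1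
        field_simp
        ring
      · rw [Set.indicator_of_notMem hx]
        have : ∀ y : Fin (k+1) → ℝ,
            (zSet (k+1) c).indicator (fun t => ENNReal.ofReal
              ((∏ i : Fin (k+1), 1 / t i.castSucc) * t (Fin.last (k+1)) ^ m))
              ((MeasurableEquiv.piFinSuccAbove (fun _ : Fin (k+2) => ℝ) 0).symm (x, y)) = 0 := by
          intro y
          rw [hsymm y, Set.indicator_of_notMem]
          intro hmem
          rw [insertNth_mem_zSet_iff] at hmem
          exact hx ⟨zSet_pos hmem.2, hmem.1⟩
        rw [lintegral_congr this, lintegral_zero]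
    rw [lintegral_congr key, lintegral_indicator measurableSet_Ioo,
      lintegral_Ioo_pow_mul m c _ hc (by positivity)]
    congr 1
    field_simp
    ring

theorem simplex_integral_eq_zeta (n : ℕ) :
    ∫ t in {t : Fin (n + 2) → ℝ | StrictAnti t ∧ 0 < t (Fin.last (n + 1)) ∧ t 0 < 1},
      ((∏ i : Fin (n + 1), 1 / t i.castSucc) * (1 / (1 - t (Fin.last (n + 1))))) =
    ∑' m : ℕ, 1 / ((m : ℝ) + 1) ^ (n + 2) := by
  have hset : {t : Fin (n + 2) → ℝ | StrictAnti t ∧ 0 < t (Fin.last (n + 1)) ∧ t 0 < 1} =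
      zSet (n+1) 1 := rfl
  rw [hset]
  have hS : MeasurableSet (zSet (n+1) 1) := measurableSet_zSet (n+1) 1
  have hsum : Summable (fun m : ℕ => 1 / ((m:ℝ) + 1) ^ (n + 2)) := by
    have h1 := (Real.summable_one_div_nat_pow (p := n + 2)).mpr (by omega)
    have h2 := (summable_nat_add_iff 1).mpr h1
    simpa [Nat.cast_add] using h2
  -- facts on the set
  have hfacts : ∀ t ∈ zSet (n+1) 1, (0:ℝ) < t (Fin.last (n+1)) ∧ t (Fin.last (n+1)) < 1 ∧
      ∀ i : Fin (n+1), 0 < t i.castSucc := by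
    intro t ht
    obtain ⟨hanti, hlast, htop⟩ := ht
    have h01 : t (Fin.last (n+1)) ≤ t 0 := hanti.antitone (Fin.zero_le _)
    exact ⟨hlast, lt_of_le_of_lt h01 htop,
      fun i => lt_of_lt_of_le hlast (hanti.antitone (Fin.le_last _))⟩
  have hmeas : Measurable (fun t : Fin (n+2) → ℝ =>
      (∏ i : Fin (n + 1), 1 / t i.castSucc) * (1 / (1 - t (Fin.last (n + 1))))) := by
    apply Measurable.mul
    · exact Finset.measurable_prod _ fun i _ => measurable_const.div (measurable_pi_apply _)
    · exact measurable_const.div (measurable_const.sub (measurable_pi_apply _))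
  rw [MeasureTheory.integral_eq_lintegral_of_nonneg_ae]
  rotate_left
  · filter_upwards [ae_restrict_mem hS] with t ht
    obtain ⟨h0, h1, hp⟩ := hfacts t ht
    have hP : 0 ≤ ∏ i : Fin (n+1), 1 / t i.castSucc :=
      Finset.prod_nonneg fun i _ => one_div_nonneg.mpr (hp i).le
    exact mul_nonneg hP (one_div_nonneg.mpr (by linarith))
  · exact hmeas.aestronglyMeasurable
  have hcong : ∫⁻ t in zSet (n+1) 1, ENNReal.ofReal
      ((∏ i : Fin (n + 1), 1 / t i.castSucc) * (1 / (1 - t (Fin.last (n + 1))))) =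
      ∫⁻ t in zSet (n+1) 1, ∑' m : ℕ, ENNReal.ofReal
        ((∏ i : Fin (n + 1), 1 / t i.castSucc) * t (Fin.last (n+1)) ^ m) := by
    apply setLIntegral_congr_fun hS
    intro t ht
    obtain ⟨h0, h1, hp⟩ := hfacts t ht
    have hP : 0 ≤ ∏ i : Fin (n+1), 1 / t i.castSucc :=
      Finset.prod_nonneg fun i _ => one_div_nonneg.mpr (hp i).le
    have hgeo : (1:ℝ) / (1 - t (Fin.last (n+1))) = ∑' m : ℕ, t (Fin.last (n+1)) ^ m := by
      rw [tsum_geometric_of_lt_one h0.le h1, one_div]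
    dsimp only
    rw [hgeo, ← tsum_mul_left, ENNReal.ofReal_tsum_of_nonneg]
    · intro m; exact mul_nonneg hP (pow_nonneg h0.le m)
    · exact (summable_geometric_of_lt_one h0.le h1).mul_left _
  rw [hcong, lintegral_tsum fun m => (measurable_monomial (n+1) m).aemeasurable]
  have heach : ∀ m : ℕ, ∫⁻ t in zSet (n+1) 1, ENNReal.ofReal
      ((∏ i : Fin (n + 1), 1 / t i.castSucc) * t (Fin.last (n+1)) ^ m) =
      ENNReal.ofReal (1 / ((m:ℝ)+1) ^ (n+2)) := by
    intro m
    rw [monomial_lintegral m (n+1) 1 one_pos, one_pow]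
  rw [tsum_congr heach, ← ENNReal.ofReal_tsum_of_nonneg (fun m => by positivity) hsum,
    ENNReal.toReal_ofReal (tsum_nonneg fun m => by positivity)]
end
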